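/- arXiv:1302.6183 — 2 statements merged into one kernel-verified Lean document; each statement's English description precedes it below -/
import Mathlib

section
/- Let G and H be finite simple graphs on the same vertex set V with every edge of H an edge of G. Then there exist integers r ≥ 1, t ≥ 0 and a map c : V → {1,...,r} ⊆ ℤ such that for every edge {u,v} of G, {u,v} is an edge of H if and only if |c(u) − c(v)| ≤ t, precisely when there exists a simple graph H* on V such that (i) every edge of H is an edge of H*, (ii) every edge of H* is either an edge of H or a non-edge of G, and (iii) H* has a unit interval representation. -/
private lemma icc_inter_abs (a b : ℝ) :
    (Set.Icc a (a + 1) ∩ Set.Icc b (b + 1)).Nonempty ↔ |a - b| ≤ 1 := by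
  rw [Set.Icc_inter_Icc, Set.nonempty_Icc, abs_sub_le_iff]
  constructor
  · rintro h
    rw [sup_le_iff, le_inf_iff, le_inf_iff] at h
    obtain ⟨⟨_, h1⟩, h2, _⟩ := h
    exact ⟨by linarith, by linarith⟩
  · rintro ⟨h1, h2⟩
    rw [sup_le_iff, le_inf_iff, le_inf_iff]
    exact ⟨⟨by linarith, by linarith⟩, by linarith, by linarith⟩

/-- For finite simple graphs `H ≤ G` on the same vertex set, `G` admits an
`(r,t)`-threshold-coloring with respect to the spanning subgraph `H` if and only if
there is a graph `H*` on `V` with `H ≤ H*`, every edge of `H*` an edge of `H` or a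
non-edge of `G`, and `H*` has a unit interval representation. -/
theorem stmt2 {V : Type*} [Fintype V] (G H : SimpleGraph V) (hHG : H ≤ G) :
    (∃ (r t : ℤ), 1 ≤ r ∧ 0 ≤ t ∧
      ∃ c : V → ℤ, (∀ v, 1 ≤ c v ∧ c v ≤ r) ∧
        ∀ u v : V, G.Adj u v → (H.Adj u v ↔ |c u - c v| ≤ t)) ↔
    (∃ Hstar : SimpleGraph V,
      H ≤ Hstar ∧
      (∀ u v : V, Hstar.Adj u v → (H.Adj u v ∨ ¬ G.Adj u v)) ∧
      ∃ f : V → ℝ, ∀ u v : V, u ≠ v →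
        (Hstar.Adj u v ↔ (Set.Icc (f u) (f u + 1) ∩ Set.Icc (f v) (f v + 1)).Nonempty)) := by
  constructor
  · rintro ⟨r, t, hr, ht, c, hc, hcol⟩
    refine ⟨⟨fun u v => u ≠ v ∧ |c u - c v| ≤ t,
        ⟨fun u v h => ⟨h.1.symm, by rw [abs_sub_comm]; exact h.2⟩⟩,
        ⟨fun v h => h.1 rfl⟩⟩, ?_, ?_, ?_⟩
    · intro u v h
      exact ⟨H.ne_of_adj h, (hcol u v (hHG h)).mp h⟩
    · intro u v h
      by_cases hG : G.Adj u v
      · exact Or.inl ((hcol u v hG).mpr h.2)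
      · exact Or.inr hG
    · have hd : (0:ℝ) < 2 * (t:ℝ) + 1 := by
        have : (0:ℝ) ≤ (t:ℝ) := by exact_mod_cast ht
        linarith
      refine ⟨fun v => 2 * (c v : ℝ) / (2 * (t:ℝ) + 1), fun u v huv => ?_⟩
      rw [icc_inter_abs]
      show u ≠ v ∧ |c u - c v| ≤ t ↔ _
      rw [div_sub_div_same, ← mul_sub, abs_div, abs_mul, abs_two,
        abs_of_pos hd, div_le_one hd]
      constructor
      · rintro ⟨-, h⟩
        have h2 : (2 * |c u - c v| : ℤ) ≤ 2 * t + 1 := by omega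
        exact_mod_cast h2
      · intro h
        refine ⟨huv, ?_⟩
        rw [show |(c u : ℝ) - (c v : ℝ)| = ((|c u - c v| : ℤ) : ℝ) by push_cast; ring_nf] at h
        have h2 : 2 * |c u - c v| ≤ 2 * t + 1 := by exact_mod_cast h
        omega
  · rintro ⟨Hs, hHHs, hHsG, f, hf⟩
    by_cases hS : ∃ u v : V, u ≠ v ∧ ¬ Hs.Adj u v
    · obtain ⟨u0, v0, hne0, hnadj0⟩ := hS
      classical
      set S : Finset (V × V) :=
        Finset.univ.filter (fun p : V × V => p.1 ≠ p.2 ∧ ¬ Hs.Adj p.1 p.2) with hSdef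
      have hSne : S.Nonempty := ⟨(u0, v0), by simp [hSdef, hne0, hnadj0]⟩
      set ε : ℝ := S.inf' hSne (fun p => |f p.1 - f p.2| - 1) with hεdef
      have hgap : ∀ u v : V, u ≠ v → ¬ Hs.Adj u v → 1 < |f u - f v| := by
        intro u v hne hn
        by_contra hle
        push_neg at hle
        exact hn ((hf u v hne).mpr ((icc_inter_abs _ _).mpr hle))
      have hε : 0 < ε := by
        rw [hεdef, Finset.lt_inf'_iff]
        rintro ⟨u, v⟩ hp
        simp only [hSdef, Finset.mem_filter] at hp
        have := hgap u v hp.2.1 hp.2.2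
        linarith
      have hεle : ∀ u v : V, u ≠ v → ¬ Hs.Adj u v → ε ≤ |f u - f v| - 1 := by
        intro u v hne hn
        exact Finset.inf'_le _ (show (u, v) ∈ S by simp [hSdef, hne, hn])
      obtain ⟨N, hN⟩ := exists_nat_gt (2 / ε)
      have hNpos : (0:ℝ) < N := lt_of_le_of_lt (by positivity) hN
      have hN2 : 2 < (N:ℝ) * ε := by
        rw [div_lt_iff₀ hε] at hN
        linarith
      set g : V → ℤ := fun v => ⌈(N:ℝ) * f v⌉ with hgdef
      have hVne : (Finset.univ : Finset V).Nonempty := ⟨u0, Finset.mem_univ _⟩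
      set m : ℤ := Finset.univ.inf' hVne g with hmdef
      set c : V → ℤ := fun v => g v - m + 1 with hcdef
      set r : ℤ := Finset.univ.sup' hVne c with hrdef
      have hc1 : ∀ v, 1 ≤ c v := by
        intro v
        have : m ≤ g v := Finset.inf'_le _ (Finset.mem_univ v)
        show 1 ≤ g v - m + 1
        omega
      have hcr : ∀ v, c v ≤ r := fun v => Finset.le_sup' _ (Finset.mem_univ v)
      refine ⟨r, (N:ℤ) + 1, le_trans (hc1 u0) (hcr u0), by positivity, c,
        fun v => ⟨hc1 v, hcr v⟩, ?_⟩
      intro u v hG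
      have hcdiff : c u - c v = g u - g v := by
        show g u - m + 1 - (g v - m + 1) = g u - g v
        ring
      have hu1 : (N:ℝ) * f u ≤ g u := Int.le_ceil _
      have hu2 : (g u : ℝ) < (N:ℝ) * f u + 1 := Int.ceil_lt_add_one _
      have hv1 : (N:ℝ) * f v ≤ g v := Int.le_ceil _
      have hv2 : (g v : ℝ) < (N:ℝ) * f v + 1 := Int.ceil_lt_add_one _
      constructor
      · intro hH
        have hadj : Hs.Adj u v := hHHs hH
        have habs : |f u - f v| ≤ 1 :=
          (icc_inter_abs _ _).mp ((hf u v hG.ne).mp hadj)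
        rw [abs_sub_le_iff] at habs
        obtain ⟨ha, hb⟩ := habs
        rw [hcdiff, abs_le]
        have hmul1 : (N:ℝ) * (f u - f v) ≤ (N:ℝ) * 1 :=
          mul_le_mul_of_nonneg_left ha hNpos.le
        have hmul2 : (N:ℝ) * (f v - f u) ≤ (N:ℝ) * 1 :=
          mul_le_mul_of_nonneg_left hb hNpos.le
        constructor
        · have : ((-(((N:ℤ)+1)) : ℤ) : ℝ) < ((g u - g v : ℤ) : ℝ) := by
            push_cast; nlinarith
          exact_mod_cast this.le
        · have : ((g u - g v : ℤ) : ℝ) < (((N:ℤ)+1 : ℤ) : ℝ) + 1 := by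
            push_cast; nlinarith
          have h2 : g u - g v < (N:ℤ) + 1 + 1 := by exact_mod_cast this
          omega
      · intro hle
        rw [hcdiff, abs_le] at hle
        obtain ⟨hl1, hl2⟩ := hle
        have hl1' : -((N:ℝ) + 1) ≤ (g u : ℝ) - g v := by exact_mod_cast hl1
        have hl2' : (g u : ℝ) - g v ≤ (N:ℝ) + 1 := by exact_mod_cast hl2
        have hadj : Hs.Adj u v := by
          by_contra hn
          have h1 : 1 + ε ≤ |f u - f v| := by
            have := hεle u v hG.ne hn
            linarith
          rcases le_abs.mp h1 with hcase | hcase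
          · nlinarith [mul_le_mul_of_nonneg_left hcase hNpos.le]
          · nlinarith [mul_le_mul_of_nonneg_left hcase hNpos.le]
        rcases hHsG u v hadj with h | h
        · exact h
        · exact absurd hG h
    · push_neg at hS
      refine ⟨1, 0, le_refl 1, le_refl 0, fun _ => 1, fun v => ⟨le_refl 1, le_refl 1⟩, ?_⟩
      intro u v hG
      have hadj : Hs.Adj u v := hS u v hG.ne
      rcases hHsG u v hadj with h | h
      · simp [h]
      · exact absurd hG h
end

section
/- Let T be a star with center v all of whose prongs have length 2 or 3, with at most three prongs of length 2. Then T is reducible: for every Boolean edge-labeling of T (true meaning near) and every assignment of colors in {0,...,7} to the leaves of T, there exist a color c(v) ∈ {0,...,7} and colors in {0,...,7} for all internal vertices of the prongs such that every edge {x,y} of T labeled true satisfies |c(x) − c(y)| ≤ 2 and every edge labeled false satisfies |c(x) − c(y)| > 2. -/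
/-- Nearness relation on `Fin 8` (distance at most 2). -/
abbrev N8 (u v : Fin 8) : Prop := u.val ≤ v.val + 2 ∧ v.val ≤ u.val + 2

/-- Solvability of a 2-prong with endpoint colors `cv`, `b` and labels `p₁ p₂`. -/
def Sol2 (cv b : Fin 8) (p₁ p₂ : Bool) : Prop :=
  ∃ x : Fin 8, (N8 cv x ↔ p₁ = true) ∧ (N8 x b ↔ p₂ = true)

instance (cv b : Fin 8) (p₁ p₂ : Bool) : Decidable (Sol2 cv b p₁ p₂) :=
  inferInstanceAs (Decidable (∃ _, _))

lemma three_good : ∀ (cv : Fin 8),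
    (cv.val = 1 ∨ cv.val = 3 ∨ cv.val = 4 ∨ cv.val = 6) →
    ∀ (a : Fin 8) (q₁ q₂ q₃ : Bool),
      ∃ y z : Fin 8, (N8 cv y ↔ q₁ = true) ∧ (N8 y z ↔ q₂ = true) ∧ (N8 z a ↔ q₃ = true) := by
  decide

lemma two_pair : ∀ (b : Fin 8) (p₁ p₂ : Bool) (c c' : Fin 8),
    (c.val = 1 ∨ c.val = 3 ∨ c.val = 4 ∨ c.val = 6) →
    (c'.val = 1 ∨ c'.val = 3 ∨ c'.val = 4 ∨ c'.val = 6) →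
    c ≠ c' → Sol2 c b p₁ p₂ ∨ Sol2 c' b p₁ p₂ := by
  decide

lemma N8_iff (u v : Fin 8) : N8 u v ↔ |(u.val : ℤ) - (v.val : ℤ)| ≤ 2 := by
  rw [abs_le]; constructor <;> intro h <;> constructor <;> omega

/-- A star with center `v`, `m` prongs of length 2 (with `m ≤ 3`) and `n` prongs of length 3
(so `m + n ≥ 3`, as the center of a star has degree ≥ 3) is reducible: for every Boolean
edge-labeling (true = near, threshold 2) and every coloring of the leaves (`b j` for the
`j`-th 2-prong, `a i` for the `i`-th 3-prong) with colors in `{0,…,7}`, there are colors in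
`{0,…,7}` for `v` and for all internal vertices realizing every edge label. Here `x j` is
the internal vertex of the `j`-th 2-prong (edge labels `p₁ j` on `v–xⱼ`, `p₂ j` on
`xⱼ–leaf`), and `y i, z i` are the internal vertices of the `i`-th 3-prong (edge labels
`q₁ i` on `v–yᵢ`, `q₂ i` on `yᵢ–zᵢ`, `q₃ i` on `zᵢ–leaf`). -/
theorem stmt17 (m n : ℕ) (hm : m ≤ 3) (hstar : 3 ≤ m + n)
    (p₁ p₂ : Fin m → Bool) (q₁ q₂ q₃ : Fin n → Bool)
    (b : Fin m → ℤ) (hb : ∀ j, 0 ≤ b j ∧ b j ≤ 7)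
    (a : Fin n → ℤ) (ha : ∀ i, 0 ≤ a i ∧ a i ≤ 7) :
    ∃ (cv : ℤ) (x : Fin m → ℤ) (y z : Fin n → ℤ),
      (0 ≤ cv ∧ cv ≤ 7) ∧
      (∀ j : Fin m,
        (0 ≤ x j ∧ x j ≤ 7) ∧
        (|cv - x j| ≤ 2 ↔ p₁ j = true) ∧
        (|x j - b j| ≤ 2 ↔ p₂ j = true)) ∧
      (∀ i : Fin n,
        (0 ≤ y i ∧ y i ≤ 7) ∧ (0 ≤ z i ∧ z i ≤ 7) ∧
        (|cv - y i| ≤ 2 ↔ q₁ i = true) ∧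
        (|y i - z i| ≤ 2 ↔ q₂ i = true) ∧
        (|z i - a i| ≤ 2 ↔ q₃ i = true)) := by
  classical
  -- lift the leaf colors to `Fin 8`
  have hbB : ∀ j, (b j).toNat < 8 := fun j => by have := hb j; omega
  have haA : ∀ i, (a i).toNat < 8 := fun i => by have := ha i; omega
  set B : Fin m → Fin 8 := fun j => ⟨(b j).toNat, hbB j⟩ with hB
  set A : Fin n → Fin 8 := fun i => ⟨(a i).toNat, haA i⟩ with hA
  -- find a good center color in {1,3,4,6}
  have hgood : ∃ c : Fin 8, (c.val = 1 ∨ c.val = 3 ∨ c.val = 4 ∨ c.val = 6) ∧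
      ∀ j, Sol2 c (B j) (p₁ j) (p₂ j) := by
    by_contra h
    push_neg at h
    obtain ⟨j1, hj1⟩ := h 1 (by decide)
    obtain ⟨j3, hj3⟩ := h 3 (by decide)
    obtain ⟨j4, hj4⟩ := h 4 (by decide)
    obtain ⟨j6, hj6⟩ := h 6 (by decide)
    have key : ∀ (jc jc' : Fin m) (c c' : Fin 8),
        (c.val = 1 ∨ c.val = 3 ∨ c.val = 4 ∨ c.val = 6) →
        (c'.val = 1 ∨ c'.val = 3 ∨ c'.val = 4 ∨ c'.val = 6) → c ≠ c' →
        ¬Sol2 c (B jc) (p₁ jc) (p₂ jc) → ¬Sol2 c' (B jc') (p₁ jc') (p₂ jc') →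
        jc ≠ jc' := by
      intro jc jc' c c' hc hc' hne hnc hnc' heq
      subst heq
      rcases two_pair (B jc) (p₁ jc) (p₂ jc) c c' hc hc' hne with h' | h' <;> tauto
    have d13 : j1 ≠ j3 := key j1 j3 1 3 (by decide) (by decide) (by decide) hj1 hj3
    have d14 : j1 ≠ j4 := key j1 j4 1 4 (by decide) (by decide) (by decide) hj1 hj4
    have d16 : j1 ≠ j6 := key j1 j6 1 6 (by decide) (by decide) (by decide) hj1 hj6
    have d34 : j3 ≠ j4 := key j3 j4 3 4 (by decide) (by decide) (by decide) hj3 hj4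
    have d36 : j3 ≠ j6 := key j3 j6 3 6 (by decide) (by decide) (by decide) hj3 hj6
    have d46 : j4 ≠ j6 := key j4 j6 4 6 (by decide) (by decide) (by decide) hj4 hj6
    have := j1.isLt; have := j3.isLt; have := j4.isLt; have := j6.isLt
    have e13 : j1.val ≠ j3.val := fun h' => d13 (Fin.ext h')
    have e14 : j1.val ≠ j4.val := fun h' => d14 (Fin.ext h')
    have e16 : j1.val ≠ j6.val := fun h' => d16 (Fin.ext h')
    have e34 : j3.val ≠ j4.val := fun h' => d34 (Fin.ext h')
    have e36 : j3.val ≠ j6.val := fun h' => d36 (Fin.ext h')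
    have e46 : j4.val ≠ j6.val := fun h' => d46 (Fin.ext h')
    omega
  obtain ⟨c, hc, hsol⟩ := hgood
  choose xf hx1 hx2 using hsol
  have h3 : ∀ i, ∃ y z : Fin 8, (N8 c y ↔ q₁ i = true) ∧ (N8 y z ↔ q₂ i = true) ∧
      (N8 z (A i) ↔ q₃ i = true) := fun i => three_good c hc (A i) (q₁ i) (q₂ i) (q₃ i)
  choose yf zf hy1 hy2 hy3 using h3
  refine ⟨(c.val : ℤ), fun j => ((xf j).val : ℤ), fun i => ((yf i).val : ℤ),
    fun i => ((zf i).val : ℤ), ⟨by omega, by have := c.isLt; omega⟩, ?_, ?_⟩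
  · intro j
    have hbj := hb j
    have hBval : ((B j).val : ℤ) = b j := by simp [hB]; omega
    refine ⟨⟨by positivity, by show ((xf j).val : ℤ) ≤ 7; have := (xf j).isLt; omega⟩, ?_, ?_⟩
    · rw [← hx1 j, N8_iff]
    · rw [← hx2 j, N8_iff, hBval]
  · intro i
    have hai := ha i
    have hAval : ((A i).val : ℤ) = a i := by simp [hA]; omega
    refine ⟨⟨by positivity, by show ((yf i).val : ℤ) ≤ 7; have := (yf i).isLt; omega⟩,
      ⟨by positivity, by show ((zf i).val : ℤ) ≤ 7; have := (zf i).isLt; omega⟩, ?_, ?_, ?_⟩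
    · rw [← hy1 i, N8_iff]
    · rw [← hy2 i, N8_iff]
    · rw [← hy3 i, N8_iff, hAval]
end
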